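/- arXiv:1209.0855 — 5 statements merged into one kernel-verified Lean document; each statement's English description precedes it below -/
import Mathlib

section
/- Let F be a field and F ∈ F[x₁,…,xₙ] a polynomial of total degree at most d₁+d₂+⋯+dₙ. For arbitrary subsets A₁,…,Aₙ of F with |Aᵢ| = dᵢ+1, the coefficient of the monomial x₁^{d₁}⋯xₙ^{dₙ} in F equals the sum over all (c₁,…,cₙ) ∈ A₁×⋯×Aₙ of F(c₁,…,cₙ)/(φ₁'(c₁)⋯φₙ'(cₙ)), where φᵢ(z) = ∏_{a∈Aᵢ}(z−a). -/
open Finset Polynomial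

lemma key1D {F : Type*} [Field F] (A : Finset F) {k : ℕ} (hk : k < A.card) :
    ∑ a ∈ A, a ^ k / Polynomial.eval a (Polynomial.derivative (∏ b ∈ A, (X - C b))) =
      if k = A.card - 1 then 1 else 0 := by
  classical
  have hinj : Set.InjOn id (A : Set F) := fun x _ y _ h => h
  have hnodal : (∏ b ∈ A, (X - C b)) = Lagrange.nodal A id := by
    simp [Lagrange.nodal]
  have hdeg : (X ^ k : F[X]).degree < A.card := by
    rw [Polynomial.degree_X_pow]; exact_mod_cast hk
  have h := Lagrange.eq_interpolate (s := A) (v := id) hinj hdeg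
  calc ∑ a ∈ A, a ^ k / Polynomial.eval a (Polynomial.derivative (∏ b ∈ A, (X - C b)))
      = ∑ a ∈ A, (C (Lagrange.nodalWeight A id a) * (Lagrange.nodal A id / (X - C (id a)))
          * C (Polynomial.eval (id a) (X ^ k : F[X]))).coeff (A.card - 1) := by
        refine Finset.sum_congr rfl fun a ha => ?_
        rw [← Lagrange.nodal_erase_eq_nodal_div ha,
          Polynomial.coeff_mul_C, Polynomial.coeff_C_mul]
        have hmon : (Lagrange.nodal (A.erase a) id).Monic := Lagrange.nodal_monic
        have hnd : (Lagrange.nodal (A.erase a) id).natDegree = A.card - 1 := by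
          rw [Lagrange.natDegree_nodal, Finset.card_erase_of_mem ha]
        rw [← hnd, hmon.coeff_natDegree, hnodal,
          Lagrange.nodalWeight_eq_eval_derivative_nodal ha]
        simp [div_eq_mul_inv, mul_comm]
      _ = ((X ^ k : F[X])).coeff (A.card - 1) := by
        rw [← Polynomial.finset_sum_coeff,
          ← Lagrange.interpolate_eq_nodalWeight_mul_nodal_div_X_sub_C, ← h]
      _ = if k = A.card - 1 then 1 else 0 := by
        rw [Polynomial.coeff_X_pow]; exact if_congr eq_comm rfl rfl

/-- The multivariate Lagrange interpolation lemma of Lasoń and Karasev–Petrov: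
if `deg f ≤ d₁ + ⋯ + dₙ` and `|Aᵢ| = dᵢ + 1`, then the coefficient of
`∏ xᵢ^{dᵢ}` in `f` equals `∑_{c ∈ A₁×⋯×Aₙ} f(c)/∏ᵢ φᵢ'(cᵢ)` where
`φᵢ(z) = ∏_{a∈Aᵢ} (z − a)`. -/
theorem lagrange_interpolation_lemma {F : Type*} [Field F] (n : ℕ) (hn : 1 ≤ n)
    (d : Fin n → ℕ) (f : MvPolynomial (Fin n) F)
    (hdeg : f.totalDegree ≤ ∑ i, d i)
    (A : Fin n → Finset F) (hA : ∀ i, (A i).card = d i + 1) :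
    MvPolynomial.coeff (Finsupp.equivFunOnFinite.symm d) f =
      ∑ c ∈ Fintype.piFinset A,
        MvPolynomial.eval c f /
          ∏ i, Polynomial.eval (c i)
            (Polynomial.derivative (∏ a ∈ A i, (Polynomial.X - Polynomial.C a))) := by
  classical
  set S : Fin n → ℕ → F := fun i k =>
    ∑ a ∈ A i, a ^ k / Polynomial.eval a
      (Polynomial.derivative (∏ b ∈ A i, (X - C b))) with hS
  have hsum_le : ∀ m ∈ f.support, ∑ i, m i ≤ ∑ i, d i := by
    intro m hm
    refine le_trans ?_ (le_trans (MvPolynomial.le_totalDegree hm) hdeg)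
    rw [Finsupp.sum_fintype]
    intro i; rfl
  have key : ∀ m ∈ f.support,
      (∏ i, S i (m i)) = if m = Finsupp.equivFunOnFinite.symm d then 1 else 0 := by
    intro m hm
    have hmd : (m = Finsupp.equivFunOnFinite.symm d) ↔ ∀ i, m i = d i := by
      rw [Equiv.eq_symm_apply]
      exact funext_iff
    by_cases hcase : ∀ i, m i = d i
    · rw [if_pos (hmd.mpr hcase)]
      refine Finset.prod_eq_one fun i _ => ?_
      have := key1D (A i) (k := m i) (by rw [hA i, hcase i]; omega)
      have h1 := hcase i
      rw [hS]; simp only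
      rw [this, hA i, if_pos (by omega)]
    · rw [if_neg (fun h => hcase (hmd.mp h))]
      have hex : ∃ j, m j < d j := by
        by_contra hno
        push_neg at hno
        have h1 := hsum_le m hm
        have h2 : ∑ i, d i ≤ ∑ i, m i :=
          Finset.sum_le_sum (fun i (_ : i ∈ Finset.univ) => hno i)
        have h3 : ∑ i, d i = ∑ i, m i := le_antisymm h2 h1
        have h4 := (Finset.sum_eq_sum_iff_of_le
          (fun i (_ : i ∈ Finset.univ) => hno i)).mp h3
        exact hcase fun i => ((h4 i (Finset.mem_univ i)).symm)
      obtain ⟨j, hj⟩ := hex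
      refine Finset.prod_eq_zero (Finset.mem_univ j) ?_
      have := key1D (A j) (k := m j) (by rw [hA j]; omega)
      rw [hS]; simp only
      rw [this, hA j, if_neg (by omega)]
  calc MvPolynomial.coeff (Finsupp.equivFunOnFinite.symm d) f
      = ∑ m ∈ f.support, MvPolynomial.coeff m f *
          (if m = Finsupp.equivFunOnFinite.symm d then 1 else 0) := by
        simp only [mul_ite, mul_one, mul_zero]
        rw [Finset.sum_ite_eq' f.support]
        split_ifs with h
        · rfl
        · rw [MvPolynomial.notMem_support_iff.mp h]
      _ = ∑ m ∈ f.support, MvPolynomial.coeff m f * ∏ i, S i (m i) := by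
        exact Finset.sum_congr rfl fun m hm => by rw [key m hm]
      _ = ∑ m ∈ f.support, MvPolynomial.coeff m f *
            ∑ c ∈ Fintype.piFinset A, ∏ i, (c i) ^ (m i) / Polynomial.eval (c i)
              (Polynomial.derivative (∏ b ∈ A i, (X - C b))) := by
        refine Finset.sum_congr rfl fun m hm => ?_
        rw [Finset.prod_univ_sum]
      _ = ∑ c ∈ Fintype.piFinset A, MvPolynomial.eval c f /
            ∏ i, Polynomial.eval (c i)
              (Polynomial.derivative (∏ a ∈ A i, (X - C a))) := by
        simp_rw [Finset.mul_sum]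
        rw [Finset.sum_comm]
        refine Finset.sum_congr rfl fun c _ => ?_
        rw [MvPolynomial.eval_eq', Finset.sum_div]
        refine Finset.sum_congr rfl fun m hm => ?_
        rw [mul_div_assoc, ← Finset.prod_div_distrib]
end

section
/- For variables u₁,…,uₘ in a field (with all relevant denominators nonzero), the identity ∑_{w∈𝔖ₘ} w(∏_{i=1}^m (1−uᵢ)/(1−u₁⋯uᵢ)) · ∏_{(i,j)∈R(w)} u_j = 1 holds, where w acts by permuting the variables uᵢ ↦ u_{w(i)}, and R(w) = {(w(j),w(i)) : 1 ≤ i < j ≤ m, w(i) > w(j)} is the inversion set of w⁻¹. -/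
open Finset

/-- `R(w) = {(w(j),w(i)) : i < j, w(i) > w(j)}`, the inversion set of `w⁻¹`. -/
def Rset {m : ℕ} (w : Equiv.Perm (Fin m)) : Finset (Fin m × Fin m) :=
  Finset.univ.filter (fun p => p.1 < p.2 ∧ w.symm p.2 < w.symm p.1)

/-- The permutation of `Fin (m+1)` sending the last position to `k` and position
`castSucc j` to `k.succAbove (σ j)`. -/
noncomputable def extPerm {m : ℕ} (k : Fin (m+1)) (σ : Equiv.Perm (Fin m)) :
    Equiv.Perm (Fin (m+1)) :=
  Equiv.ofBijective (fun i => Fin.lastCases k (fun j => k.succAbove (σ j)) i)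
    (Finite.injective_iff_bijective.mp (by
      intro a b hab
      induction a using Fin.lastCases with
      | last =>
        induction b using Fin.lastCases with
        | last => rfl
        | cast j =>
          simp only [Fin.lastCases_last, Fin.lastCases_castSucc] at hab
          exact absurd hab.symm (Fin.succAbove_ne k (σ j))
      | cast i =>
        induction b using Fin.lastCases with
        | last =>
          simp only [Fin.lastCases_last, Fin.lastCases_castSucc] at hab
          exact absurd hab (Fin.succAbove_ne k (σ i))
        | cast j =>
          simp only [Fin.lastCases_castSucc] at hab
          have := σ.injective (Fin.succAbove_right_injective hab)
          rw [this]))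

@[simp] lemma extPerm_last {m : ℕ} (k : Fin (m+1)) (σ : Equiv.Perm (Fin m)) :
    extPerm k σ (Fin.last m) = k := by
  simp [extPerm]

@[simp] lemma extPerm_castSucc {m : ℕ} (k : Fin (m+1)) (σ : Equiv.Perm (Fin m)) (j : Fin m) :
    extPerm k σ (Fin.castSucc j) = k.succAbove (σ j) := by
  simp [extPerm]

@[simp] lemma extPerm_symm_k {m : ℕ} (k : Fin (m+1)) (σ : Equiv.Perm (Fin m)) :
    (extPerm k σ).symm k = Fin.last m := by
  rw [Equiv.symm_apply_eq]; simp

@[simp] lemma extPerm_symm_succAbove {m : ℕ} (k : Fin (m+1)) (σ : Equiv.Perm (Fin m))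
    (j : Fin m) : (extPerm k σ).symm (k.succAbove j) = Fin.castSucc (σ.symm j) := by
  rw [Equiv.symm_apply_eq]; simp

lemma extPerm_bijective {m : ℕ} :
    Function.Bijective (fun p : Fin (m+1) × Equiv.Perm (Fin m) => extPerm p.1 p.2) := by
  rw [Fintype.bijective_iff_injective_and_card]
  constructor
  · rintro ⟨k, σ⟩ ⟨k', σ'⟩ h
    have hk : k = k' := by
      have := congrArg (fun w => (w : Equiv.Perm (Fin (m+1))) (Fin.last m)) h
      simpa using this
    subst hk
    have hσ : σ = σ' := by
      ext j
      have := congrArg (fun w => (w : Equiv.Perm (Fin (m+1))) (Fin.castSucc j)) h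
      simp only [extPerm_castSucc] at this
      exact congrArg _ (Fin.succAbove_right_injective this)
    rw [hσ]
  · simp [Fintype.card_perm, Nat.factorial_succ]

lemma Rset_extPerm {m : ℕ} (k : Fin (m+1)) (σ : Equiv.Perm (Fin m)) :
    Rset (extPerm k σ) =
      ((Rset σ).image (fun p => (k.succAbove p.1, k.succAbove p.2))) ∪
        ((Finset.univ.filter (k < ·)).image (fun v => (k, v))) := by
  ext ⟨a, b⟩
  simp only [Rset, mem_filter, mem_union, mem_image, mem_univ, true_and, Prod.mk.injEq,
    Prod.exists]
  constructor
  · rintro ⟨hab, hs⟩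
    by_cases hbk : b = k
    · subst hbk
      simp only [extPerm_symm_k] at hs
      exact absurd hs (Fin.not_lt.mpr (Fin.le_last _))
    · obtain ⟨j, hj⟩ := Fin.exists_succAbove_eq hbk
      by_cases hak : a = k
      · subst hak
        exact Or.inr ⟨b, hab, rfl, rfl⟩
      · obtain ⟨i, hi⟩ := Fin.exists_succAbove_eq hak
        subst hi; subst hj
        rw [extPerm_symm_succAbove, extPerm_symm_succAbove, Fin.castSucc_lt_castSucc_iff] at hs
        exact Or.inl ⟨i, j, ⟨Fin.succAbove_lt_succAbove_iff.mp hab, hs⟩, rfl, rfl⟩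
  · rintro (⟨i, j, ⟨hij, hs⟩, rfl, rfl⟩ | ⟨v, hv, rfl, rfl⟩)
    · refine ⟨Fin.succAbove_lt_succAbove_iff.mpr hij, ?_⟩
      rw [extPerm_symm_succAbove, extPerm_symm_succAbove, Fin.castSucc_lt_castSucc_iff]
      exact hs
    · refine ⟨hv, ?_⟩
      obtain ⟨j, hj⟩ := Fin.exists_succAbove_eq (ne_of_gt hv)
      rw [extPerm_symm_k, ← hj, extPerm_symm_succAbove]
      exact Fin.castSucc_lt_last _

lemma prod_Rset_extPerm {F : Type*} [Field F] {m : ℕ} (k : Fin (m+1))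
    (σ : Equiv.Perm (Fin m)) (u : Fin (m+1) → F) :
    ∏ p ∈ Rset (extPerm k σ), u p.2 =
      (∏ p ∈ Rset σ, u (k.succAbove p.2)) * ∏ v ∈ Finset.univ.filter (k < ·), u v := by
  rw [Rset_extPerm, prod_union, prod_image, prod_image]
  · rintro v - v' - h
    exact (Prod.mk.injEq _ _ _ _ ▸ h).2
  · rintro p - p' - h
    obtain ⟨h1, h2⟩ := Prod.mk.injEq _ _ _ _ ▸ h
    exact Prod.ext (Fin.succAbove_right_injective h1) (Fin.succAbove_right_injective h2)
  · rw [Finset.disjoint_left]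
    rintro ⟨a, b⟩ h1 h2
    simp only [mem_image, Prod.mk.injEq, Prod.exists] at h1 h2
    obtain ⟨i, j, -, rfl, -⟩ := h1
    obtain ⟨v, -, hv, -⟩ := h2
    exact Fin.succAbove_ne k i hv.symm

lemma filter_le_castSucc {m : ℕ} (i : Fin m) :
    (Finset.univ.filter (· ≤ Fin.castSucc i) : Finset (Fin (m+1))) =
      (Finset.univ.filter (· ≤ i)).map Fin.castSuccEmb := by
  ext j
  simp only [mem_filter, mem_univ, true_and, mem_map, Fin.coe_castSuccEmb]
  constructor
  · intro hj
    have hne : j ≠ Fin.last m := by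
      intro h; subst h
      exact absurd (lt_of_le_of_lt hj (Fin.castSucc_lt_last i)) (lt_irrefl _)
    obtain ⟨j', rfl⟩ := Fin.exists_castSucc_eq.mpr hne
    refine ⟨j', ?_, rfl⟩
    simpa using Fin.le_def.mp hj
  · rintro ⟨j', hj', rfl⟩
    refine Fin.le_def.mpr ?_
    simpa using hj'

lemma prod_main_extPerm {F : Type*} [Field F] {m : ℕ} (k : Fin (m+1))
    (σ : Equiv.Perm (Fin m)) (u : Fin (m+1) → F) :
    (∏ i : Fin (m+1), (1 - u (extPerm k σ i)) /
        (1 - ∏ j ∈ Finset.univ.filter (· ≤ i), u (extPerm k σ j))) =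
      (∏ i : Fin m, (1 - u (k.succAbove (σ i))) /
          (1 - ∏ j ∈ Finset.univ.filter (· ≤ i), u (k.succAbove (σ j)))) *
        ((1 - u k) / (1 - ∏ v, u v)) := by
  rw [Fin.prod_univ_castSucc]
  congr 1
  · refine Finset.prod_congr rfl fun i _ => ?_
    rw [extPerm_castSucc, filter_le_castSucc, Finset.prod_map]
    simp only [Fin.coe_castSuccEmb, extPerm_castSucc]
  · have h1 : (Finset.univ.filter (· ≤ Fin.last m) : Finset (Fin (m+1))) = Finset.univ := by
      ext j; simp [Fin.le_last]
    rw [extPerm_last, h1]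
    congr 1
    rw [Equiv.prod_comp (extPerm k σ) u]

lemma telescope {F : Type*} [Field F] {m : ℕ} (u : Fin (m+1) → F)
    (h : (∏ v, u v) ≠ 1) :
    ∑ k : Fin (m+1),
      (1 - u k) / (1 - ∏ v, u v) * ∏ v ∈ Finset.univ.filter (k < ·), u v = 1 := by
  set f : ℕ → F := fun n => ∏ v ∈ Finset.univ.filter (fun v : Fin (m+1) => n ≤ (v : ℕ)), u v
    with hf
  have key : ∀ k : Fin (m+1),
      (1 - u k) * ∏ v ∈ Finset.univ.filter (k < ·), u v = f ((k : ℕ) + 1) - f (k : ℕ) := by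
    intro k
    have e1 : (Finset.univ.filter (k < ·) : Finset (Fin (m+1))) =
        Finset.univ.filter (fun v : Fin (m+1) => (k : ℕ) + 1 ≤ (v : ℕ)) := by
      ext v; simp only [mem_filter, mem_univ, true_and, Fin.lt_def]; exact Nat.lt_iff_add_one_le
    have e2 : (Finset.univ.filter (fun v : Fin (m+1) => (k : ℕ) ≤ (v : ℕ))) =
        insert k (Finset.univ.filter (fun v : Fin (m+1) => (k : ℕ) + 1 ≤ (v : ℕ))) := by
      ext v
      simp only [mem_filter, mem_univ, true_and, mem_insert]
      constructor
      · intro hv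
        rcases eq_or_lt_of_le hv with h' | h'
        · exact Or.inl (Fin.ext h'.symm)
        · exact Or.inr h'
      · rintro (rfl | hv)
        · exact le_refl _
        · omega
    have hk : k ∉ (Finset.univ.filter (fun v : Fin (m+1) => (k : ℕ) + 1 ≤ (v : ℕ))) := by
      simp
    rw [e1, hf]
    simp only
    rw [e2, Finset.prod_insert hk]
    ring
  have sum_eq : ∑ k : Fin (m+1), (f ((k : ℕ) + 1) - f (k : ℕ)) = f (m+1) - f 0 := by
    rw [Fin.sum_univ_eq_sum_range (fun i => f (i+1) - f i)]
    exact Finset.sum_range_sub f (m+1)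
  have hf0 : f 0 = ∏ v, u v := by
    simp [hf]
  have hfm : f (m+1) = 1 := by
    rw [hf]
    have : (Finset.univ.filter (fun v : Fin (m+1) => m + 1 ≤ (v : ℕ))) = ∅ := by
      ext v; simp only [mem_filter, mem_univ, true_and, notMem_empty, iff_false]
      omega
    simp only [this, prod_empty]
  have hD : (1 : F) - ∏ v, u v ≠ 0 := sub_ne_zero.mpr (Ne.symm h)
  calc ∑ k : Fin (m+1),
        (1 - u k) / (1 - ∏ v, u v) * ∏ v ∈ Finset.univ.filter (k < ·), u v
      = ∑ k : Fin (m+1),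
        ((1 - u k) * ∏ v ∈ Finset.univ.filter (k < ·), u v) / (1 - ∏ v, u v) := by
        refine Finset.sum_congr rfl fun k _ => ?_; ring
    _ = (∑ k : Fin (m+1), (f ((k : ℕ) + 1) - f (k : ℕ))) / (1 - ∏ v, u v) := by
        rw [Finset.sum_div]
        exact Finset.sum_congr rfl fun k _ => by rw [key k]
    _ = 1 := by rw [sum_eq, hfm, hf0, div_self hD]

/-- `∑_{w∈𝔖ₘ} w(∏ᵢ (1−uᵢ)/(1−u₁⋯uᵢ)) ∏_{(i,j)∈R(w)} u_j = 1`. -/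
theorem perm_sum_one {F : Type*} [Field F] (m : ℕ) (u : Fin m → F)
    (hu : ∀ S : Finset (Fin m), S.Nonempty → ∏ i ∈ S, u i ≠ 1) :
    ∑ w : Equiv.Perm (Fin m),
      (∏ i, (1 - u (w i)) / (1 - ∏ j ∈ Finset.univ.filter (· ≤ i), u (w j)))
        * ∏ p ∈ Rset w, u p.2 = 1 := by
  induction m with
  | zero =>
    have : ∀ w : Equiv.Perm (Fin 0), Rset w = ∅ := by
      intro w
      ext ⟨a, b⟩
      exact absurd a.is_lt (by omega)
    simp [this, Finset.card_univ]
  | succ m ih =>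
    have hD : (∏ v, u v) ≠ 1 := hu Finset.univ univ_nonempty
    have hbij := Fintype.sum_bijective
      (fun p : Fin (m+1) × Equiv.Perm (Fin m) => extPerm p.1 p.2) extPerm_bijective
      (fun p => (∏ i, (1 - u (extPerm p.1 p.2 i)) /
          (1 - ∏ j ∈ Finset.univ.filter (· ≤ i), u (extPerm p.1 p.2 j)))
        * ∏ q ∈ Rset (extPerm p.1 p.2), u q.2)
      (fun w => (∏ i, (1 - u (w i)) /
          (1 - ∏ j ∈ Finset.univ.filter (· ≤ i), u (w j))) * ∏ q ∈ Rset w, u q.2)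
      (fun p => rfl)
    rw [← hbij, Fintype.sum_prod_type]
    have inner : ∀ k : Fin (m+1),
        (∑ σ : Equiv.Perm (Fin m),
          (∏ i, (1 - u (extPerm k σ i)) /
              (1 - ∏ j ∈ Finset.univ.filter (· ≤ i), u (extPerm k σ j)))
            * ∏ q ∈ Rset (extPerm k σ), u q.2)
        = (1 - u k) / (1 - ∏ v, u v) * ∏ v ∈ Finset.univ.filter (k < ·), u v := by
      intro k
      have hu' : ∀ S : Finset (Fin m), S.Nonempty → ∏ i ∈ S, u (k.succAbove i) ≠ 1 := by
        intro S hS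
        have := hu (S.map ⟨k.succAbove, Fin.succAbove_right_injective⟩) (by simpa using hS)
        simpa [Finset.prod_map] using this
      have ihk := ih (fun i => u (k.succAbove i)) hu'
      calc (∑ σ : Equiv.Perm (Fin m),
            (∏ i, (1 - u (extPerm k σ i)) /
                (1 - ∏ j ∈ Finset.univ.filter (· ≤ i), u (extPerm k σ j)))
              * ∏ q ∈ Rset (extPerm k σ), u q.2)
          = ∑ σ : Equiv.Perm (Fin m),
            ((∏ i, (1 - u (k.succAbove (σ i))) /
                (1 - ∏ j ∈ Finset.univ.filter (· ≤ i), u (k.succAbove (σ j))))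
              * ∏ q ∈ Rset σ, u (k.succAbove q.2))
            * ((1 - u k) / (1 - ∏ v, u v) * ∏ v ∈ Finset.univ.filter (k < ·), u v) := by
            refine Finset.sum_congr rfl fun σ _ => ?_
            rw [prod_main_extPerm, prod_Rset_extPerm]
            ring
        _ = (1 - u k) / (1 - ∏ v, u v) * ∏ v ∈ Finset.univ.filter (k < ·), u v := by
            rw [← Finset.sum_mul, ihk, one_mul]
    calc (∑ k : Fin (m+1), ∑ σ : Equiv.Perm (Fin m),
          (∏ i, (1 - u (extPerm k σ i)) /
              (1 - ∏ j ∈ Finset.univ.filter (· ≤ i), u (extPerm k σ j)))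
            * ∏ q ∈ Rset (extPerm k σ), u q.2)
        = ∑ k : Fin (m+1),
          (1 - u k) / (1 - ∏ v, u v) * ∏ v ∈ Finset.univ.filter (k < ·), u v :=
          Finset.sum_congr rfl fun k _ => inner k
      _ = 1 := telescope u hD
end

section
/- Fix 1 ≤ k ≤ n. Then ∑_{w∈𝔖ₙ, w(n)=k} ∏_{i=1}^n (1−u_{w(i)})/(1−u_{w(1)}⋯u_{w(i)}) · ∏_{(i,j)∈R(w)} u_j = u_{k+1}⋯uₙ(1−u_k)/(1−u₁⋯uₙ), where the sum is over permutations w with w(n)=k and R(w) is the set of inverted pairs as usual. -/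
open Finset

namespace PermSumAux

variable {F : Type*} [Field F]

/-- The summand attached to a permutation. -/
def term {m : ℕ} (u : Fin m → F) (w : Equiv.Perm (Fin m)) : F :=
  (∏ i, (1 - u (w i)) / (1 - ∏ j ∈ Finset.univ.filter (· ≤ i), u (w j)))
    * ∏ p ∈ Rset w, u p.2

/-- Extend a permutation of `Fin n` to a permutation of `Fin (n+1)` sending `last` to `k`
and acting via `succAbove k` otherwise. -/
def extPerm {n : ℕ} (k : Fin (n + 1)) (σ : Equiv.Perm (Fin n)) : Equiv.Perm (Fin (n + 1)) :=
  (finSuccEquivLast.trans σ.optionCongr).trans (finSuccEquiv' k).symm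

@[simp] lemma extPerm_castSucc {n : ℕ} (k : Fin (n + 1)) (σ : Equiv.Perm (Fin n)) (i : Fin n) :
    extPerm k σ (Fin.castSucc i) = k.succAbove (σ i) := by
  simp [extPerm]

@[simp] lemma extPerm_last {n : ℕ} (k : Fin (n + 1)) (σ : Equiv.Perm (Fin n)) :
    extPerm k σ (Fin.last n) = k := by
  simp [extPerm]

@[simp] lemma extPerm_symm_succAbove {n : ℕ} (k : Fin (n + 1)) (σ : Equiv.Perm (Fin n))
    (q : Fin n) : (extPerm k σ).symm (k.succAbove q) = Fin.castSucc (σ.symm q) := by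
  simp [extPerm, Equiv.symm_trans_apply, ← Equiv.optionCongr_symm, finSuccEquivLast_symm_some]

@[simp] lemma extPerm_symm_self {n : ℕ} (k : Fin (n + 1)) (σ : Equiv.Perm (Fin n)) :
    (extPerm k σ).symm k = Fin.last n := by
  simp [extPerm, Equiv.symm_trans_apply, finSuccEquiv'_at, ← Equiv.optionCongr_symm]

lemma extPerm_injective {n : ℕ} (k : Fin (n + 1)) : Function.Injective (extPerm (n := n) k) := by
  intro σ σ' h
  apply Equiv.ext
  intro i
  have h1 : k.succAbove (σ i) = k.succAbove (σ' i) := by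
    rw [← extPerm_castSucc k σ i, ← extPerm_castSucc k σ' i, h]
  exact Fin.succAbove_right_injective h1

lemma exists_extPerm {n : ℕ} {k : Fin (n + 1)} {w : Equiv.Perm (Fin (n + 1))}
    (hw : w (Fin.last n) = k) : ∃ σ : Equiv.Perm (Fin n), extPerm k σ = w := by
  set E : Option (Fin n) ≃ Option (Fin n) :=
    (finSuccEquivLast.symm.trans w).trans (finSuccEquiv' k) with hE
  refine ⟨Equiv.removeNone E, ?_⟩
  have key : ∀ i : Fin n, k.succAbove (Equiv.removeNone E i) = w (Fin.castSucc i) := by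
    intro i
    have hne : w (Fin.castSucc i) ≠ k := by
      rw [← hw]
      intro hcontra
      exact absurd (w.injective hcontra) (Fin.castSucc_lt_last i).ne
    obtain ⟨q, hq⟩ := Fin.exists_succAbove_eq hne
    have hEs : E (some i) = some q := by
      simp [hE, Equiv.trans_apply, ← hq]
    have := Equiv.removeNone_some E ⟨q, hEs⟩
    rw [hEs] at this
    have hq' : Equiv.removeNone E i = q := by
      exact Option.some_injective _ this
    rw [hq', hq]
  ext x
  refine Fin.lastCases ?_ ?_ x
  · rw [extPerm_last, hw]
  · intro i
    rw [extPerm_castSucc, key]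

lemma prod_le_castSucc {n : ℕ} (g : Fin (n + 1) → F) (m : Fin n) :
    ∏ j ∈ Finset.univ.filter (· ≤ Fin.castSucc m), g j
      = ∏ j ∈ Finset.univ.filter (· ≤ m), g (Fin.castSucc j) := by
  rw [Finset.prod_filter, Finset.prod_filter, Fin.prod_univ_castSucc]
  simp [Fin.castSucc_le_castSucc_iff, (Fin.castSucc_lt_last m).not_ge]

lemma Rset_extPerm {n : ℕ} (k : Fin (n + 1)) (σ : Equiv.Perm (Fin n)) :
    Rset (extPerm k σ) =
      (Finset.univ.filter (fun j => k < j)).image (fun j => (k, j)) ∪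
        (Rset σ).image (fun q => (k.succAbove q.1, k.succAbove q.2)) := by
  ext ⟨a, b⟩
  simp only [Rset, Finset.mem_filter, Finset.mem_univ, true_and, Finset.mem_union,
    Finset.mem_image, Prod.mk.injEq, Prod.exists]
  constructor
  · rintro ⟨hab, hsym⟩
    by_cases ha : a = k
    · subst ha
      exact Or.inl ⟨b, hab, rfl, rfl⟩
    · right
      obtain ⟨a', rfl⟩ := Fin.exists_succAbove_eq ha
      have hb : b ≠ k := by
        rintro rfl
        rw [extPerm_symm_self, extPerm_symm_succAbove] at hsym
        exact absurd hsym (Fin.le_last _).not_gt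
      obtain ⟨b', rfl⟩ := Fin.exists_succAbove_eq hb
      rw [extPerm_symm_succAbove, extPerm_symm_succAbove] at hsym
      refine ⟨a', b', ⟨Fin.succAbove_lt_succAbove_iff.mp hab,
        Fin.castSucc_lt_castSucc_iff.mp hsym⟩, rfl, rfl⟩
  · rintro (⟨j, hj, h1, h2⟩ | ⟨a', b', hq, h1, h2⟩)
    · subst h1; subst h2
      refine ⟨hj, ?_⟩
      have hb : j ≠ k := hj.ne'
      obtain ⟨b', rfl⟩ := Fin.exists_succAbove_eq hb
      rw [extPerm_symm_self, extPerm_symm_succAbove]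
      exact Fin.castSucc_lt_last _
    · subst h1; subst h2
      rw [extPerm_symm_succAbove, extPerm_symm_succAbove]
      exact ⟨Fin.succAbove_lt_succAbove_iff.mpr hq.1, Fin.castSucc_lt_castSucc_iff.mpr hq.2⟩

lemma prod_Rset_extPerm {n : ℕ} (u : Fin (n + 1) → F) (k : Fin (n + 1))
    (σ : Equiv.Perm (Fin n)) :
    ∏ p ∈ Rset (extPerm k σ), u p.2
      = (∏ j ∈ Finset.univ.filter (fun j => k < j), u j)
          * ∏ q ∈ Rset σ, u (k.succAbove q.2) := by
  rw [Rset_extPerm, Finset.prod_union, Finset.prod_image, Finset.prod_image]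
  · intro x _ y _ h
    have h1 : k.succAbove x.1 = k.succAbove y.1 := congrArg Prod.fst h
    have h2 : k.succAbove x.2 = k.succAbove y.2 := congrArg Prod.snd h
    exact Prod.ext (Fin.succAbove_right_injective h1) (Fin.succAbove_right_injective h2)
  · intro x _ y _ h
    exact congrArg Prod.snd h
  · rw [Finset.disjoint_left]
    rintro ⟨a, b⟩ h1 h2
    simp only [Finset.mem_image, Prod.mk.injEq, Prod.exists] at h1 h2
    obtain ⟨j, _, hj1, _⟩ := h1
    obtain ⟨a', b', _, ha', _⟩ := h2
    rw [← hj1] at ha'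
    exact Fin.succAbove_ne k a' ha'

lemma term_extPerm {n : ℕ} (u : Fin (n + 1) → F) (k : Fin (n + 1)) (σ : Equiv.Perm (Fin n)) :
    term u (extPerm k σ) =
      term (u ∘ k.succAbove) σ
        * ((∏ i ∈ Finset.univ.filter (fun i => k < i), u i) * ((1 - u k) / (1 - ∏ i, u i))) := by
  unfold term
  rw [Fin.prod_univ_castSucc]
  have hlast : Finset.univ.filter (fun j : Fin (n + 1) => j ≤ Fin.last n) = Finset.univ := by
    refine Finset.filter_true_of_mem fun j _ => Fin.le_last j
  have hwprod : ∏ j, u (extPerm k σ j) = ∏ i, u i := Equiv.prod_comp (extPerm k σ) u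
  have hmain : ∀ m : Fin n,
      (1 - u (extPerm k σ (Fin.castSucc m))) /
          (1 - ∏ j ∈ Finset.univ.filter (· ≤ Fin.castSucc m), u (extPerm k σ j))
        = (1 - (u ∘ k.succAbove) (σ m)) /
          (1 - ∏ j ∈ Finset.univ.filter (· ≤ m), (u ∘ k.succAbove) (σ j)) := by
    intro m
    rw [prod_le_castSucc (fun j => u (extPerm k σ j)) m]
    simp [Function.comp]
  rw [Finset.prod_congr rfl (fun m _ => hmain m), extPerm_last, hlast, hwprod,
    prod_Rset_extPerm]
  simp only [Function.comp_apply, Function.comp]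
  ring

lemma refined (n : ℕ)
    (ih : ∀ v : Fin n → F, (∀ S : Finset (Fin n), S.Nonempty → ∏ i ∈ S, v i ≠ 1) →
      ∑ σ : Equiv.Perm (Fin n), term v σ = 1)
    (u : Fin (n + 1) → F)
    (hu : ∀ S : Finset (Fin (n + 1)), S.Nonempty → ∏ i ∈ S, u i ≠ 1)
    (k : Fin (n + 1)) :
    ∑ w ∈ Finset.univ.filter (fun w : Equiv.Perm (Fin (n + 1)) => w (Fin.last n) = k),
        term u w
      = (∏ i ∈ Finset.univ.filter (fun i => k < i), u i) * (1 - u k) / (1 - ∏ i, u i) := by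
  have hbij : ∑ w ∈ Finset.univ.filter
        (fun w : Equiv.Perm (Fin (n + 1)) => w (Fin.last n) = k), term u w
      = ∑ σ : Equiv.Perm (Fin n), term u (extPerm k σ) := by
    refine (Finset.sum_bij (fun σ _ => extPerm k σ) ?_ ?_ ?_ ?_).symm
    · intro σ _
      simp [Finset.mem_filter]
    · intro σ _ σ' _ h
      exact extPerm_injective k h
    · intro w hw
      rw [Finset.mem_filter] at hw
      obtain ⟨σ, hσ⟩ := exists_extPerm hw.2
      exact ⟨σ, Finset.mem_univ σ, hσ⟩
    · intro σ _
      rfl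
  have hv : ∀ S : Finset (Fin n), S.Nonempty → ∏ i ∈ S, (u ∘ k.succAbove) i ≠ 1 := by
    intro S hS
    have : ∏ i ∈ S, (u ∘ k.succAbove) i = ∏ i ∈ S.image k.succAbove, u i := by
      rw [Finset.prod_image]
      · rfl
      · intro x _ y _ h
        exact Fin.succAbove_right_injective h
    rw [this]
    exact hu _ (hS.image _)
  calc ∑ w ∈ Finset.univ.filter
        (fun w : Equiv.Perm (Fin (n + 1)) => w (Fin.last n) = k), term u w
      = ∑ σ : Equiv.Perm (Fin n), term u (extPerm k σ) := hbij
    _ = ∑ σ : Equiv.Perm (Fin n), term (u ∘ k.succAbove) σ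
          * ((∏ i ∈ Finset.univ.filter (fun i => k < i), u i)
              * ((1 - u k) / (1 - ∏ i, u i))) :=
        Finset.sum_congr rfl fun σ _ => term_extPerm u k σ
    _ = (∑ σ : Equiv.Perm (Fin n), term (u ∘ k.succAbove) σ)
          * ((∏ i ∈ Finset.univ.filter (fun i => k < i), u i)
              * ((1 - u k) / (1 - ∏ i, u i))) := by rw [← Finset.sum_mul]
    _ = (∏ i ∈ Finset.univ.filter (fun i => k < i), u i) * (1 - u k) / (1 - ∏ i, u i) := by
        rw [ih _ hv, one_mul, mul_div_assoc]

lemma telescope {n : ℕ} (u : Fin (n + 1) → F)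
    (hu : ∀ S : Finset (Fin (n + 1)), S.Nonempty → ∏ i ∈ S, u i ≠ 1) :
    ∑ k : Fin (n + 1),
        (∏ i ∈ Finset.univ.filter (fun i => k < i), u i) * (1 - u k) / (1 - ∏ i, u i) = 1 := by
  have hP : (1 : F) - ∏ i, u i ≠ 0 := by
    intro h
    exact hu Finset.univ Finset.univ_nonempty (by linear_combination -h)
  set G : ℕ → F := fun t => ∏ i ∈ Finset.univ.filter (fun i : Fin (n + 1) => t ≤ i.val), u i
    with hG
  have hterm : ∀ k : Fin (n + 1),
      (∏ i ∈ Finset.univ.filter (fun i => k < i), u i) * (1 - u k)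
        = G (k.val + 1) - G k.val := by
    intro k
    have hA : ∏ i ∈ Finset.univ.filter (fun i => k < i), u i = G (k.val + 1) := by
      apply Finset.prod_congr _ fun _ _ => rfl
      apply Finset.filter_congr
      intro i _
      rw [Fin.lt_iff_val_lt_val]
      exact Nat.lt_iff_add_one_le
    have hB : u k * ∏ i ∈ Finset.univ.filter (fun i => k < i), u i = G k.val := by
      have hfil : Finset.univ.filter (fun i : Fin (n + 1) => (k.val : ℕ) ≤ i.val)
          = insert k (Finset.univ.filter (fun i => k < i)) := by
        ext i
        simp only [Finset.mem_filter, Finset.mem_univ, true_and, Finset.mem_insert]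
        constructor
        · intro h
          rcases eq_or_lt_of_le h with h' | h'
          · exact Or.inl (Fin.ext h'.symm)
          · exact Or.inr (Fin.lt_iff_val_lt_val.mpr h')
        · rintro (rfl | h)
          · exact le_refl _
          · exact le_of_lt (Fin.lt_iff_val_lt_val.mp h)
      rw [hG]
      simp only
      rw [hfil, Finset.prod_insert]
      simp [Finset.mem_filter]
    rw [mul_one_sub, mul_comm _ (u k), hB, hA]
  have hsum : ∑ k : Fin (n + 1),
      ((∏ i ∈ Finset.univ.filter (fun i => k < i), u i) * (1 - u k)) = 1 - ∏ i, u i := by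
    have h1 := Fin.sum_univ_eq_sum_range (fun t => G (t + 1) - G t) (n + 1)
    have h2 : ∑ t ∈ Finset.range (n + 1), (G (t + 1) - G t) = G (n + 1) - G 0 :=
      Finset.sum_range_sub G (n + 1)
    have hG0 : G 0 = ∏ i, u i := by
      rw [hG]
      simp
    have hGtop : G (n + 1) = 1 := by
      rw [hG]
      simp only
      rw [Finset.filter_false_of_mem, Finset.prod_empty]
      intro i _
      exact Nat.not_le.mpr (Nat.lt_succ_of_le (Nat.le_of_lt_succ i.isLt))
    rw [Finset.sum_congr rfl fun k _ => hterm k, h1, h2, hG0, hGtop]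
  rw [← Finset.sum_div, hsum, div_self hP]

lemma total : ∀ (m : ℕ) (u : Fin m → F),
    (∀ S : Finset (Fin m), S.Nonempty → ∏ i ∈ S, u i ≠ 1) →
    ∑ w : Equiv.Perm (Fin m), term u w = 1 := by
  intro m
  induction m with
  | zero =>
    intro u hu
    have : ∀ w : Equiv.Perm (Fin 0), term u w = 1 := by
      intro w
      have hR : Rset w = ∅ := Finset.eq_empty_of_isEmpty _
      simp [term, hR]
    rw [Finset.sum_congr rfl fun w _ => this w, Finset.sum_const, nsmul_eq_mul, mul_one]
    rw [Finset.card_univ]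
    simp
  | succ n ih =>
    intro u hu
    have hfib : ∑ w : Equiv.Perm (Fin (n + 1)), term u w
        = ∑ k : Fin (n + 1), ∑ w ∈ Finset.univ.filter
            (fun w : Equiv.Perm (Fin (n + 1)) => w (Fin.last n) = k), term u w :=
      (Finset.sum_fiberwise _ _ _).symm
    rw [hfib, Finset.sum_congr rfl fun k _ => refined n ih u hu k]
    exact telescope u hu

end PermSumAux

/-- The refinement of the identity `∑_w w(∏ᵢ(1−uᵢ)/(1−u₁⋯uᵢ))·∏_{(i,j)∈R(w)}u_j = 1`
to permutations with prescribed last value `w(n) = k`. -/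
theorem perm_sum_fixed_last {F : Type*} [Field F] (n : ℕ) (u : Fin (n + 1) → F)
    (hu : ∀ S : Finset (Fin (n + 1)), S.Nonempty → ∏ i ∈ S, u i ≠ 1)
    (k : Fin (n + 1)) :
    ∑ w ∈ Finset.univ.filter (fun w : Equiv.Perm (Fin (n + 1)) => w (Fin.last n) = k),
      (∏ i, (1 - u (w i)) / (1 - ∏ j ∈ Finset.univ.filter (· ≤ i), u (w j)))
        * ∏ p ∈ Rset w, u p.2
      = (∏ i ∈ Finset.univ.filter (fun i => k < i), u i) * (1 - u k)
          / (1 - ∏ i, u i) := by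
  have h := PermSumAux.refined n (PermSumAux.total n) u hu k
  simpa [PermSumAux.term] using h
end

section
/- Let S ⊆ {(i,j) : 1 ≤ i < j ≤ n}, and define d_j = |{i : (i,j)∈S}|, e_i = |{j : (i,j)∈S}|, ℓ_i = (n−i) + d_i − e_i, and let K = K(S) be the largest nonnegative integer k such that for every 0 ≤ j < k there is exactly one i with ℓ_i = j. Then no index i satisfies ℓ_i = K. -/
open Finset

/-- The column sums `d_j = #{i : (i,j) ∈ S}`. -/
def dS {n : ℕ} (S : Finset (Fin n × Fin n)) (j : Fin n) : ℕ :=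
  (S.filter (fun p => p.2 = j)).card

/-- The row sums `e_i = #{j : (i,j) ∈ S}`. -/
def eS {n : ℕ} (S : Finset (Fin n × Fin n)) (i : Fin n) : ℕ :=
  (S.filter (fun p => p.1 = i)).card

/-- `ℓ_i = (n − i) + d_i − e_i` (with `i` running through `1,…,n`;
here `i : Fin n` is 0-indexed, so `n − i` becomes `n − 1 − i`). -/
def ellS {n : ℕ} (S : Finset (Fin n × Fin n)) (i : Fin n) : ℤ :=
  ((n : ℤ) - 1 - (i : ℤ)) + (dS S i : ℤ) - (eS S i : ℤ)

/-- out-degree in the associated tournament -/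
def outdeg {n : ℕ} (S : Finset (Fin n × Fin n)) (i : Fin n) : ℕ :=
  (univ.filter (fun j => (i < j ∧ (i, j) ∉ S) ∨ (j < i ∧ (j, i) ∈ S))).card

lemma ell_eq_outdeg {n : ℕ} (S : Finset (Fin n × Fin n))
    (hS : ∀ p ∈ S, p.1 < p.2) (i : Fin n) :
    ellS S i = (outdeg S i : ℤ) := by
  classical
  have hd : dS S i = (univ.filter (fun j => j < i ∧ (j, i) ∈ S)).card := by
    refine Finset.card_bij' (fun p _ => p.1) (fun j _ => (j, i)) ?_ ?_ ?_ ?_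
    · intro p hp
      simp only [mem_filter] at hp ⊢
      obtain ⟨hp1, hp2⟩ := hp
      refine ⟨mem_univ _, ?_, ?_⟩
      · have := hS p hp1; rw [hp2] at this; exact this
      · rw [← hp2]; exact hp1
    · intro j hj
      simp only [mem_filter] at hj
      simp [hj.2.2]
    · intro p hp
      simp only [mem_filter] at hp
      exact Prod.ext rfl hp.2.symm
    · intro j hj; rfl
  have he : eS S i = (univ.filter (fun j => i < j ∧ (i, j) ∈ S)).card := by
    refine Finset.card_bij' (fun p _ => p.2) (fun j _ => (i, j)) ?_ ?_ ?_ ?_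
    · intro p hp
      simp only [mem_filter] at hp ⊢
      obtain ⟨hp1, hp2⟩ := hp
      refine ⟨mem_univ _, ?_, ?_⟩
      · have := hS p hp1; rw [hp2] at this; exact this
      · rw [← hp2]; exact hp1
    · intro j hj
      simp only [mem_filter] at hj
      simp [hj.2.2]
    · intro p hp
      simp only [mem_filter] at hp
      exact Prod.ext hp.2.symm rfl
    · intro j hj; rfl
  -- split outdeg
  have hsplit : outdeg S i =
      (univ.filter (fun j => i < j ∧ (i, j) ∉ S)).card
      + (univ.filter (fun j => j < i ∧ (j, i) ∈ S)).card := by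
    rw [outdeg, filter_or]
    apply card_union_of_disjoint
    rw [Finset.disjoint_left]
    intro a ha hb
    simp only [mem_filter] at ha hb
    exact absurd (ha.2.1.trans hb.2.1) (lt_irrefl _)
  have hIoi : (univ.filter (fun j => i < j)) = Finset.Ioi i := by
    ext j; simp
  have hcardIoi : (univ.filter (fun j => i < j)).card = n - 1 - (i : ℕ) := by
    rw [hIoi, Fin.card_Ioi]
  have hsub : (univ.filter (fun j => i < j ∧ (i, j) ∈ S))
      ⊆ (univ.filter (fun j => i < j)) := by
    intro j hj; simp only [mem_filter] at hj ⊢; exact ⟨hj.1, hj.2.1⟩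
  have hsd : (univ.filter (fun j => i < j ∧ (i, j) ∉ S))
      = (univ.filter (fun j => i < j)) \ (univ.filter (fun j => i < j ∧ (i, j) ∈ S)) := by
    ext j
    simp only [mem_filter, mem_sdiff, mem_univ, true_and]
    tauto
  have hcard1 : (univ.filter (fun j => i < j ∧ (i, j) ∉ S)).card
      = (n - 1 - (i : ℕ)) - eS S i := by
    rw [hsd, card_sdiff_of_subset hsub, hcardIoi, he]
  have hele : eS S i ≤ n - 1 - (i : ℕ) := by
    rw [he, ← hcardIoi]; exact card_le_card hsub
  have hlt : (i : ℕ) < n := i.isLt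
  unfold ellS
  rw [hsplit, hcard1, ← hd]
  omega


lemma landau_ineq {n : ℕ} (S : Finset (Fin n × Fin n)) (T : Finset (Fin n)) :
    T.card * T.card ≤ 2 * (∑ i ∈ T, outdeg S i) + T.card := by
  classical
  set β : Fin n → Fin n → Prop :=
    fun i j => (i < j ∧ (i, j) ∉ S) ∨ (j < i ∧ (j, i) ∈ S) with hβ
  set P : Finset (Fin n × Fin n) := (T ×ˢ T).filter (fun p => β p.1 p.2) with hP
  have hfiber : P.card = ∑ i ∈ T, (P.filter (fun p => p.1 = i)).card := by
    apply Finset.card_eq_sum_card_fiberwise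
    intro p hp
    simp only [hP, Finset.mem_coe, mem_filter, mem_product] at hp
    exact hp.1.1
  have hfib2 : ∀ i ∈ T, (P.filter (fun p => p.1 = i)).card = (T.filter (fun j => β i j)).card := by
    intro i hiT
    refine Finset.card_bij' (fun p _ => p.2) (fun j _ => (i, j)) ?_ ?_ ?_ ?_
    · intro p hp
      simp only [hP, mem_filter, mem_product] at hp ⊢
      obtain ⟨⟨⟨h1, h2⟩, hb⟩, he⟩ := hp
      subst he
      exact ⟨h2, hb⟩
    · intro j hj
      simp only [hP, mem_filter, mem_product] at hj ⊢
      exact ⟨⟨⟨hiT, hj.1⟩, hj.2⟩, trivial⟩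
    · intro p hp
      simp only [hP, mem_filter] at hp
      exact Prod.ext hp.2.symm rfl
    · intro j hj
      rfl
  have hPsub : P.card ≤ ∑ i ∈ T, outdeg S i := by
    rw [hfiber]
    apply Finset.sum_le_sum
    intro i hiT
    rw [hfib2 i hiT]
    exact card_le_card (Finset.filter_subset_filter _ (subset_univ T))
  -- offDiag splits into P and its swap
  have hswap : T.offDiag = P ∪ P.image Prod.swap := by
    ext p
    simp only [Finset.mem_offDiag, hP, mem_union, mem_image, mem_filter, mem_product]
    constructor
    · rintro ⟨h1, h2, h3⟩
      rcases lt_or_gt_of_ne (fun h : p.1 = p.2 => h3 h) with hlt | hgt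
      · by_cases hm : (p.1, p.2) ∈ S
        · right
          exact ⟨(p.2, p.1), ⟨⟨h2, h1⟩, Or.inr ⟨hlt, hm⟩⟩, rfl⟩
        · left; exact ⟨⟨h1, h2⟩, Or.inl ⟨hlt, hm⟩⟩
      · by_cases hm : (p.2, p.1) ∈ S
        · left; exact ⟨⟨h1, h2⟩, Or.inr ⟨hgt, hm⟩⟩
        · right
          exact ⟨(p.2, p.1), ⟨⟨h2, h1⟩, Or.inl ⟨hgt, hm⟩⟩, rfl⟩
    · rintro (⟨⟨h1, h2⟩, hb⟩ | ⟨q, ⟨⟨h1, h2⟩, hb⟩, hq⟩)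
      · rcases hb with ⟨hlt, _⟩ | ⟨hlt, _⟩
        · exact ⟨h1, h2, ne_of_lt hlt⟩
        · exact ⟨h1, h2, (ne_of_lt hlt).symm⟩
      · subst hq
        rcases hb with ⟨hlt, _⟩ | ⟨hlt, _⟩
        · exact ⟨h2, h1, (ne_of_lt hlt).symm⟩
        · exact ⟨h2, h1, ne_of_lt hlt⟩
  have hdisj : Disjoint P (P.image Prod.swap) := by
    rw [Finset.disjoint_left]
    rintro p hp hq
    simp only [hP, mem_filter, mem_image, mem_product] at hp hq
    obtain ⟨q, ⟨_, hqb⟩, hqe⟩ := hq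
    subst hqe
    rcases hp.2 with ⟨h1, h2⟩ | ⟨h1, h2⟩ <;> rcases hqb with ⟨h3, h4⟩ | ⟨h3, h4⟩ <;>
      simp_all [Prod.swap] <;> omega
  have hcardswap : (P.image Prod.swap).card = P.card :=
    Finset.card_image_of_injective _ Prod.swap_injective
  have hoff : T.offDiag.card = 2 * P.card := by
    rw [hswap, Finset.card_union_of_disjoint hdisj, hcardswap]; ring
  have := Finset.offDiag_card T
  omega

/-- Lemma 3.2: if `K` is the largest nonnegative integer such that every value
`0 ≤ j < K` is attained exactly once among the `ℓ_i`, then no `i` satisfies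
`ℓ_i = K`. (The hypotheses express that `K` is such a largest integer.) -/
theorem ell_not_attained (n : ℕ) (hn : 2 ≤ n) (S : Finset (Fin n × Fin n))
    (hS : ∀ p ∈ S, p.1 < p.2) (K : ℕ)
    (hK1 : ∀ j : ℕ, j < K →
      (Finset.univ.filter (fun i => ellS S i = (j : ℤ))).card = 1)
    (hK2 : (Finset.univ.filter (fun i => ellS S i = (K : ℤ))).card ≠ 1) :
    (Finset.univ.filter (fun i => ellS S i = (K : ℤ))).card = 0 := by
  classical
  set A : ℕ → Finset (Fin n) :=
    fun j => univ.filter (fun i => ellS S i = (j : ℤ)) with hA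
  set c := (A K).card with hc
  by_contra hne
  have hc2 : 2 ≤ c := by
    rcases Nat.lt_or_ge c 2 with h | h
    · interval_cases c <;> simp_all
    · exact h
  set T : Finset (Fin n) := univ.filter (fun i => ellS S i ≤ (K : ℤ)) with hT
  have hnonneg : ∀ i : Fin n, 0 ≤ ellS S i := by
    intro i
    rw [ell_eq_outdeg S hS]
    positivity
  have hTb : T = (Finset.range (K + 1)).biUnion A := by
    ext i
    simp only [hT, hA, mem_filter, mem_univ, true_and, mem_biUnion, mem_range]
    constructor
    · intro h
      refine ⟨(ellS S i).toNat, ?_, ?_⟩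
      · have := hnonneg i; omega
      · have := hnonneg i; omega
    · rintro ⟨j, hj, hji⟩
      rw [hji]
      exact_mod_cast Nat.lt_succ_iff.mp hj
  have hdisjA : ∀ j1 ∈ Finset.range (K + 1), ∀ j2 ∈ Finset.range (K + 1),
      j1 ≠ j2 → Disjoint (A j1) (A j2) := by
    intro j1 _ j2 _ hne
    rw [Finset.disjoint_left]
    intro a ha hb
    simp only [hA, mem_filter] at ha hb
    exact hne (by exact_mod_cast ha.2.symm.trans hb.2)
  have hcardT : T.card = K + c := by
    rw [hTb, Finset.card_biUnion hdisjA, Finset.sum_range_succ]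
    have : ∑ j ∈ Finset.range K, (A j).card = ∑ j ∈ Finset.range K, 1 := by
      apply Finset.sum_congr rfl
      intro j hj
      exact hK1 j (Finset.mem_range.mp hj)
    rw [this]
    simp [hc]
  have hsumT : ∑ i ∈ T, ellS S i
      = (∑ j ∈ Finset.range K, (j : ℤ)) + (K : ℤ) * c := by
    rw [hTb, Finset.sum_biUnion hdisjA, Finset.sum_range_succ]
    congr 1
    · apply Finset.sum_congr rfl
      intro j hj
      have hs : ∑ i ∈ A j, ellS S i = (A j).card • (j : ℤ) := by
        rw [← Finset.sum_const]
        apply Finset.sum_congr rfl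
        intro i hi
        simp only [hA, mem_filter] at hi
        exact hi.2
      rw [hs, hK1 j (Finset.mem_range.mp hj), one_smul]
    · have hs : ∑ i ∈ A K, ellS S i = (A K).card • (K : ℤ) := by
        rw [← Finset.sum_const]
        apply Finset.sum_congr rfl
        intro i hi
        simp only [hA, mem_filter] at hi
        exact hi.2
      rw [hs, ← hc]
      push_cast
      ring
  have hL := landau_ineq S T
  have hLZ : (T.card : ℤ) * T.card ≤ 2 * (∑ i ∈ T, ellS S i) + T.card := by
    have : ∑ i ∈ T, ellS S i = ((∑ i ∈ T, outdeg S i : ℕ) : ℤ) := by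
      push_cast
      exact Finset.sum_congr rfl (fun i _ => ell_eq_outdeg S hS i)
    rw [this]
    exact_mod_cast hL
  have hG : (∑ j ∈ Finset.range K, (j : ℤ)) * 2 = (K : ℤ) * K - K := by
    have h1 : (∑ j ∈ Finset.range K, (j : ℤ)) = ((∑ j ∈ Finset.range K, j : ℕ) : ℤ) := by
      push_cast; rfl
    rw [h1]
    have h2 : ((∑ j ∈ Finset.range K, j : ℕ) : ℤ) * 2 = ((K * (K - 1) : ℕ) : ℤ) := by
      exact_mod_cast Finset.sum_range_id_mul_two K
    rw [h2]
    cases K with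
    | zero => simp
    | succ k => push_cast [Nat.succ_sub_one]; ring
  rw [hcardT, hsumT] at hLZ
  have hcZ : (2 : ℤ) ≤ (c : ℤ) := by exact_mod_cast hc2
  push_cast at hLZ
  nlinarith [hLZ, hG, hcZ]
end

section
/- Let s₁ = 0, let s₂,…,sₙ,s_{n+1} = s be arbitrary (real or integer) numbers, and for a permutation π ∈ 𝔖ₙ set a_{π(i)} = s_{i+1} − s_i. Define t_i = C(s_i,2) + s_i(s − s_{i+1}) − (n−i)s_i, t_< = ∑_{i<j, π(i)<π(j)} (C(a_{π(i)},2) + (a_{π(i)}+a_{π(j)}−1)s_i) and t_> = ∑_{i<j, π(i)>π(j)} (C(a_{π(i)},2) + (a_{π(i)}+a_{π(j)}−1)s_i). Then t_< + t_> = ∑_{i=1}^n t_i. -/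
open Finset

/-- `C(x,2) = x(x−1)/2`, the binomial coefficient extended polynomially. -/
def ch2 (x : ℚ) : ℚ := x * (x - 1) / 2


lemma tele (n : ℕ) (g : Fin (n+1) → ℚ) (i : Fin n) :
    ∑ j ∈ Ioi i, (g j.succ - g j.castSucc) = g (Fin.last n) - g i.succ := by
  have hn : 0 < n := i.pos
  have hi := i.isLt
  set G : ℕ → ℚ := fun k => g ⟨min k n, by omega⟩ with hG
  have key : ∀ j : Fin n, g j.succ - g j.castSucc = G (j.val + 1) - G j.val := by
    intro j
    have hj := j.isLt
    have h1 : G (j.val + 1) = g j.succ := by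
      simp only [hG]; congr 1; ext
      simp only [Fin.val_succ]; omega
    have h2 : G j.val = g j.castSucc := by
      simp only [hG]; congr 1; ext
      simp only [Fin.coe_castSucc]; omega
    rw [h1, h2]
  rw [Finset.sum_congr rfl (fun j _ => key j)]
  have hmap : ∑ j ∈ Ioi i, (G (j.val + 1) - G j.val)
      = ∑ k ∈ Finset.Ioc (i : ℕ) (n - 1), (G (k + 1) - G k) := by
    rw [show Finset.Ioc (i : ℕ) (n - 1) = Finset.Ioo (i : ℕ) n by
      ext k; simp only [Finset.mem_Ioc, Finset.mem_Ioo]; omega]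
    rw [← Fin.map_valEmbedding_Ioi, Finset.sum_map]
    rfl
  rw [hmap]
  have hIoc : Finset.Ioc (i : ℕ) (n - 1) = Finset.Ico ((i : ℕ) + 1) n := by
    ext k; simp only [Finset.mem_Ioc, Finset.mem_Ico]; omega
  rw [hIoc, Finset.sum_Ico_eq_sub _ (by omega : (i : ℕ) + 1 ≤ n),
    Finset.sum_range_sub, Finset.sum_range_sub]
  have h1 : G n = g (Fin.last n) := by
    simp only [hG]; congr 1; ext; simp only [Fin.val_last]; omega
  have h2 : G ((i : ℕ) + 1) = g i.succ := by
    simp only [hG]; congr 1; ext; simp only [Fin.val_succ]; omega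
  rw [h1, h2]; ring

lemma tele0 (n : ℕ) (g : Fin (n+1) → ℚ) :
    ∑ i : Fin n, (g i.succ - g i.castSucc) = g (Fin.last n) - g 0 := by
  set G : ℕ → ℚ := fun k => g ⟨min k n, by omega⟩ with hG
  have key : ∀ j : Fin n, g j.succ - g j.castSucc = G (j.val + 1) - G j.val := by
    intro j
    have hj := j.isLt
    have h1 : G (j.val + 1) = g j.succ := by
      simp only [hG]; congr 1; ext
      simp only [Fin.val_succ]; omega
    have h2 : G j.val = g j.castSucc := by
      simp only [hG]; congr 1; ext
      simp only [Fin.coe_castSucc]; omega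
    rw [h1, h2]
  rw [Finset.sum_congr rfl (fun j _ => key j)]
  rw [Fin.sum_univ_eq_sum_range (fun k => G (k+1) - G k), Finset.sum_range_sub]
  have h1 : G n = g (Fin.last n) := by
    simp only [hG]; congr 1; ext; simp only [Fin.val_last]; omega
  have h2 : G 0 = g 0 := by
    simp only [hG]; congr 1
  rw [h1, h2]

lemma pair_sum (n : ℕ) (f : Fin n × Fin n → ℚ) :
    ∑ p ∈ Finset.univ.filter (fun p : Fin n × Fin n => p.1 < p.2), f p
    = ∑ i : Fin n, ∑ j ∈ Ioi i, f (i, j) := by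
  rw [Finset.sum_filter, Fintype.sum_prod_type]
  refine Finset.sum_congr rfl fun i _ => ?_
  rw [← Finset.sum_filter]
  refine Finset.sum_congr ?_ fun j _ => rfl
  ext j; simp

/-- The claim `t_< + t_> = ∑ᵢ tᵢ` from the proof of the Poincaré q-Dyson
theorem.  Here `s 0 = 0`, `s (Fin.last n)` plays the role of `s = s_{n+1}`,
`a_{π(i)} = s_{i+1} − s_i`, and (0-indexed) `tᵢ` carries the coefficient
`n − 1 − i` in place of the 1-indexed `n − i`. -/
theorem t_sum_identity (n : ℕ) (s : Fin (n + 1) → ℚ) (h0 : s 0 = 0)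
    (π : Equiv.Perm (Fin n)) (a : Fin n → ℚ)
    (ha : ∀ i : Fin n, a (π i) = s i.succ - s i.castSucc) :
    (∑ p ∈ Finset.univ.filter
        (fun p : Fin n × Fin n => p.1 < p.2 ∧ π p.1 < π p.2),
        (ch2 (a (π p.1)) + (a (π p.1) + a (π p.2) - 1) * s p.1.castSucc))
    + (∑ p ∈ Finset.univ.filter
        (fun p : Fin n × Fin n => p.1 < p.2 ∧ π p.2 < π p.1),
        (ch2 (a (π p.1)) + (a (π p.1) + a (π p.2) - 1) * s p.1.castSucc))
    = ∑ i : Fin n,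
        (ch2 (s i.castSucc) + s i.castSucc * (s (Fin.last n) - s i.succ)
          - ((n : ℚ) - 1 - (i : ℕ)) * s i.castSucc) := by
  set f : Fin n × Fin n → ℚ :=
    fun p => ch2 (a (π p.1)) + (a (π p.1) + a (π p.2) - 1) * s p.1.castSucc with hf
  have hsplit :
      (∑ p ∈ Finset.univ.filter
        (fun p : Fin n × Fin n => p.1 < p.2 ∧ π p.1 < π p.2), f p)
      + (∑ p ∈ Finset.univ.filter
        (fun p : Fin n × Fin n => p.1 < p.2 ∧ π p.2 < π p.1), f p)
      = ∑ p ∈ Finset.univ.filter (fun p : Fin n × Fin n => p.1 < p.2), f p := by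
    rw [← Finset.sum_filter_add_sum_filter_not
      (Finset.univ.filter (fun p : Fin n × Fin n => p.1 < p.2))
      (fun p => π p.1 < π p.2) f]
    congr 1
    · refine Finset.sum_congr ?_ fun _ _ => rfl
      rw [Finset.filter_filter]
    · refine Finset.sum_congr ?_ fun _ _ => rfl
      rw [Finset.filter_filter]
      ext p
      simp only [Finset.mem_filter, Finset.mem_univ, true_and]
      constructor
      · rintro ⟨h1, h2⟩
        exact ⟨h1, not_lt.mpr h2.le⟩
      · rintro ⟨h1, h2⟩
        refine ⟨h1, lt_of_le_of_ne (not_lt.mp h2) ?_⟩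
        intro he
        exact absurd (π.injective he) (ne_of_gt h1)
  rw [hsplit, pair_sum]
  have inner : ∀ i : Fin n,
      ∑ j ∈ Ioi i, f (i, j)
      = ((n : ℚ) - 1 - (i : ℕ)) * (ch2 (a (π i)) + (a (π i) - 1) * s i.castSucc)
        + s i.castSucc * (s (Fin.last n) - s i.succ) := by
    intro i
    have hi := i.isLt
    have step : ∀ j ∈ Ioi i, f (i, j)
        = (ch2 (a (π i)) + (a (π i) - 1) * s i.castSucc)
          + (s j.succ - s j.castSucc) * s i.castSucc := by
      intro j _
      simp only [hf, ha j]
      ring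
    rw [Finset.sum_congr rfl step, Finset.sum_add_distrib, Finset.sum_const,
      ← Finset.sum_mul, tele n s i, Fin.card_Ioi, nsmul_eq_mul]
    have hcast : ((n - 1 - (i : ℕ) : ℕ) : ℚ) = (n : ℚ) - 1 - (i : ℕ) := by
      have : (n - 1 - (i : ℕ) : ℕ) = n - (1 + (i : ℕ)) := by omega
      rw [this, Nat.cast_sub (by omega)]
      push_cast; ring
    rw [hcast]; ring
  rw [Finset.sum_congr rfl (fun i _ => inner i)]
  rw [← sub_eq_zero, ← Finset.sum_sub_distrib]
  have key : ∀ i : Fin n,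
      (((n : ℚ) - 1 - (i : ℕ)) * (ch2 (a (π i)) + (a (π i) - 1) * s i.castSucc)
        + s i.castSucc * (s (Fin.last n) - s i.succ))
      - (ch2 (s i.castSucc) + s i.castSucc * (s (Fin.last n) - s i.succ)
          - ((n : ℚ) - 1 - (i : ℕ)) * s i.castSucc)
      = ((n : ℚ) - (i.succ : Fin (n+1)).val) * ch2 (s i.succ)
        - ((n : ℚ) - (i.castSucc : Fin (n+1)).val) * ch2 (s i.castSucc) := by
    intro i
    rw [ha i]
    simp only [Fin.val_succ, Fin.coe_castSucc, ch2]
    push_cast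
    ring
  rw [Finset.sum_congr rfl (fun i _ => key i),
    tele0 n (fun k => ((n : ℚ) - k.val) * ch2 (s k))]
  simp [h0, ch2]
end
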